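/- arXiv:2408.10087 — 2 statements merged into one kernel-verified Lean document; each statement's English description precedes it below -/
import Mathlib

section
/- Let X be a digital image and i ∈ {1,2}. Then X is NP_i-irreducible if and only if no automorphism of X is NP_i-homotopic to a non-surjective continuous map. -/
/-- A digital image: a finite set with a reflexive, symmetric adjacency relation
(a finite reflexive graph). -/
structure DigImage where
  carrier : Type
  [fintype : Fintype carrier]
  adj : carrier → carrier → Prop
  adj_refl : ∀ x, adj x x
  adj_symm : ∀ {x y}, adj x y → adj y x

attribute [instance] DigImage.fintype

/-- `f : (X,κ) → (Y,λ)` is digitally continuous if it preserves adjacency. -/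
def DigContinuous (X Y : DigImage) (f : X.carrier → Y.carrier) : Prop :=
  ∀ ⦃a b : X.carrier⦄, X.adj a b → Y.adj (f a) (f b)

/-- The product of two digital images with the normal product adjacency `NP_i`
(for `i ≤ 1` this is `NP_1`; otherwise `NP_2`): two pairs are adjacent iff
their coordinates are adjacent in at most `i` positions and equal elsewhere. -/
def DigImage.prod (i : ℕ) (X Y : DigImage) : DigImage where
  carrier := X.carrier × Y.carrier
  adj p q :=
    if i ≤ 1 then (p.1 = q.1 ∧ Y.adj p.2 q.2) ∨ (p.2 = q.2 ∧ X.adj p.1 q.1)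
    else X.adj p.1 q.1 ∧ Y.adj p.2 q.2
  adj_refl p := by
    split_ifs
    · exact Or.inl ⟨rfl, Y.adj_refl p.2⟩
    · exact ⟨X.adj_refl p.1, Y.adj_refl p.2⟩
  adj_symm {p q} h := by
    split_ifs at h ⊢ with hi
    · rcases h with ⟨h1, h2⟩ | ⟨h1, h2⟩
      · exact Or.inl ⟨h1.symm, Y.adj_symm h2⟩
      · exact Or.inr ⟨h1.symm, X.adj_symm h2⟩
    · exact ⟨X.adj_symm h.1, Y.adj_symm h.2⟩

/-- The triple product of digital images with the normal product adjacency `NP_i`: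
coordinates adjacent in at most `i` positions and equal in all other positions. -/
def DigImage.prod3 (i : ℕ) (X Y Z : DigImage) : DigImage where
  carrier := X.carrier × Y.carrier × Z.carrier
  adj p q :=
    if i ≤ 1 then
      (p.1 = q.1 ∧ p.2.1 = q.2.1 ∧ Z.adj p.2.2 q.2.2) ∨
      (p.1 = q.1 ∧ p.2.2 = q.2.2 ∧ Y.adj p.2.1 q.2.1) ∨
      (p.2.1 = q.2.1 ∧ p.2.2 = q.2.2 ∧ X.adj p.1 q.1)
    else
      (p.1 = q.1 ∧ Y.adj p.2.1 q.2.1 ∧ Z.adj p.2.2 q.2.2) ∨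
      (p.2.1 = q.2.1 ∧ X.adj p.1 q.1 ∧ Z.adj p.2.2 q.2.2) ∨
      (p.2.2 = q.2.2 ∧ X.adj p.1 q.1 ∧ Y.adj p.2.1 q.2.1)
  adj_refl p := by
    split_ifs
    · exact Or.inl ⟨rfl, rfl, Z.adj_refl p.2.2⟩
    · exact Or.inl ⟨rfl, Y.adj_refl p.2.1, Z.adj_refl p.2.2⟩
  adj_symm {p q} h := by
    split_ifs at h ⊢ with hi
    · rcases h with ⟨h1, h2, h3⟩ | ⟨h1, h2, h3⟩ | ⟨h1, h2, h3⟩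
      · exact Or.inl ⟨h1.symm, h2.symm, Z.adj_symm h3⟩
      · exact Or.inr (Or.inl ⟨h1.symm, h2.symm, Y.adj_symm h3⟩)
      · exact Or.inr (Or.inr ⟨h1.symm, h2.symm, X.adj_symm h3⟩)
    · rcases h with ⟨h1, h2, h3⟩ | ⟨h1, h2, h3⟩ | ⟨h1, h2, h3⟩
      · exact Or.inl ⟨h1.symm, Y.adj_symm h2, Z.adj_symm h3⟩
      · exact Or.inr (Or.inl ⟨h1.symm, X.adj_symm h2, Z.adj_symm h3⟩)
      · exact Or.inr (Or.inr ⟨h1.symm, X.adj_symm h2, Y.adj_symm h3⟩)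

/-- The digital interval `[0,m]_ℤ` with the standard adjacency `|a−b| ≤ 1`. -/
def digInterval (m : ℕ) : DigImage where
  carrier := Fin (m + 1)
  adj a b := |(a : ℤ) - (b : ℤ)| ≤ 1
  adj_refl a := by simp
  adj_symm {a b} h := by
    have h' : |(a : ℤ) - (b : ℤ)| ≤ 1 := h
    rw [abs_sub_comm] at h'
    exact h'

/-- `f` and `g` are `NP_i`-digitally homotopic: there is an
`NP_i`-continuous `H : X × [0,m]_ℤ → Y` with `H(·,0) = f` and `H(·,m) = g`. -/
def DigHomotopic (i : ℕ) (X Y : DigImage) (f g : X.carrier → Y.carrier) : Prop :=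
  ∃ (m : ℕ) (H : X.carrier × Fin (m + 1) → Y.carrier),
    DigContinuous (DigImage.prod i X (digInterval m)) Y H ∧
    (∀ x, H (x, 0) = f x) ∧ (∀ x, H (x, Fin.last m) = g x)

/-- An `NP_i`-digital H-space `(X,e,μ)`. -/
structure IsHSpace (i : ℕ) (X : DigImage) (e : X.carrier)
    (μ : X.carrier × X.carrier → X.carrier) : Prop where
  continuous : DigContinuous (DigImage.prod i X X) X μ
  right_unit : DigHomotopic i X X (fun x => μ (x, e)) id
  left_unit : DigHomotopic i X X (fun x => μ (e, x)) id

/-- H-equivalence of `NP_i`-digital H-spaces. -/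
def HSpaceEquiv (i : ℕ) (X : DigImage) (eX : X.carrier)
    (μX : X.carrier × X.carrier → X.carrier)
    (Y : DigImage) (eY : Y.carrier)
    (μY : Y.carrier × Y.carrier → Y.carrier) : Prop :=
  ∃ (f : X.carrier → Y.carrier) (g : Y.carrier → X.carrier),
    DigContinuous X Y f ∧ DigContinuous Y X g ∧ f eX = eY ∧ g eY = eX ∧
    DigHomotopic i Y Y (f ∘ g) id ∧ DigHomotopic i X X (g ∘ f) id ∧
    DigHomotopic i (DigImage.prod i X X) Y (fun p => f (μX p)) (fun p => μY (f p.1, f p.2)) ∧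
    DigHomotopic i (DigImage.prod i Y Y) X (fun p => g (μY p)) (fun p => μX (g p.1, g p.2))

/-- `NP_i`-homotopy equivalence of digital images. -/
def DigHtpyEquiv (i : ℕ) (X Y : DigImage) : Prop :=
  ∃ (f : X.carrier → Y.carrier) (g : Y.carrier → X.carrier),
    DigContinuous X Y f ∧ DigContinuous Y X g ∧
    DigHomotopic i X X (g ∘ f) id ∧ DigHomotopic i Y Y (f ∘ g) id

/-- A digital image is `NP_i`-irreducible if it is not `NP_i`-homotopy
equivalent to any digital image with fewer points. -/
def DigIrreducible (i : ℕ) (X : DigImage) : Prop :=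
  ¬ ∃ Y : DigImage, Fintype.card Y.carrier < Fintype.card X.carrier ∧ DigHtpyEquiv i X Y

/-- A digital image is connected if any two points are joined by a path
of consecutively adjacent points. -/
def DigConnected (X : DigImage) : Prop :=
  ∀ a b : X.carrier, Relation.ReflTransGen X.adj a b

/-- A digital image is `NP_i`-contractible if the identity is `NP_i`-homotopic
to a constant map. -/
def DigContractible (i : ℕ) (X : DigImage) : Prop :=
  ∃ c : X.carrier, DigHomotopic i X X id (fun _ => c)

/-- An isomorphism of digital images: a continuous bijection with continuous inverse. -/
def IsDigIso (X Y : DigImage) (f : X.carrier → Y.carrier) : Prop :=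
  DigContinuous X Y f ∧ ∃ g : Y.carrier → X.carrier,
    DigContinuous Y X g ∧ Function.LeftInverse g f ∧ Function.RightInverse g f

/-- The sub-digital-image on the points satisfying `P`, with the induced adjacency. -/
noncomputable def subImage (X : DigImage) (P : X.carrier → Prop) : DigImage where
  carrier := {x : X.carrier // P x}
  fintype := Fintype.ofFinite _
  adj a b := X.adj a.1 b.1
  adj_refl a := X.adj_refl a.1
  adj_symm h := X.adj_symm h

/-- The connected component of `e`, as a digital image. -/
noncomputable def componentImage (X : DigImage) (e : X.carrier) : DigImage :=
  subImage X (fun x => Relation.ReflTransGen X.adj e x)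

/-- Homotopy-associativity of an `NP_i`-digital multiplication:
`μ∘(id × μ) ≃ᵢ μ∘(μ × id)` as maps `X × X × X → X` with `NP_i` adjacency. -/
def HomotopyAssociative (i : ℕ) (X : DigImage)
    (μ : X.carrier × X.carrier → X.carrier) : Prop :=
  DigHomotopic i (DigImage.prod3 i X X X) X
    (fun p => μ (p.1, μ (p.2.1, p.2.2)))
    (fun p => μ (μ (p.1, p.2.1), p.2.2))

/-- `α` is a left homotopy-inverse for the H-space `(X,e,μ)`. -/
def LeftHtpyInverse (i : ℕ) (X : DigImage) (e : X.carrier)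
    (μ : X.carrier × X.carrier → X.carrier) (α : X.carrier → X.carrier) : Prop :=
  DigContinuous X X α ∧ DigContinuous X X (fun x => μ (α x, x)) ∧
  DigHomotopic i X X (fun x => μ (α x, x)) (fun _ => e)

/-- `β` is a right homotopy-inverse for the H-space `(X,e,μ)`. -/
def RightHtpyInverse (i : ℕ) (X : DigImage) (e : X.carrier)
    (μ : X.carrier × X.carrier → X.carrier) (β : X.carrier → X.carrier) : Prop :=
  DigContinuous X X β ∧ DigContinuous X X (fun x => μ (x, β x)) ∧
  DigHomotopic i X X (fun x => μ (x, β x)) (fun _ => e)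

section AuxHelpers

/-- One-step adjacency between maps, matching the `NP_i` product condition. -/
def StepAdj (i : ℕ) (X Y : DigImage) (f g : X.carrier → Y.carrier) : Prop :=
  if i ≤ 1 then ∀ x, Y.adj (f x) (g x)
  else ∀ ⦃x x'⦄, X.adj x x' → Y.adj (f x) (g x')

/-- A chain of maps, a combinatorial reformulation of digital homotopy. -/
def MapChain (i : ℕ) (X Y : DigImage) (f g : X.carrier → Y.carrier) : Prop :=
  ∃ (m : ℕ) (F : ℕ → X.carrier → Y.carrier),
    F 0 = f ∧ F m = g ∧ (∀ k, k ≤ m → DigContinuous X Y (F k)) ∧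
    (∀ k, k < m → StepAdj i X Y (F k) (F (k+1)))

def clampFin (m k : ℕ) : Fin (m+1) := ⟨min k m, Nat.lt_succ_of_le (min_le_right k m)⟩

lemma clampFin_zero (m : ℕ) : clampFin m 0 = 0 := by
  apply Fin.ext; simp [clampFin]

lemma clampFin_last (m : ℕ) : clampFin m m = Fin.last m := by
  apply Fin.ext; simp [clampFin, Fin.val_last]

lemma clampFin_val (m k : ℕ) (hk : k ≤ m) : (clampFin m k).val = k := by
  simp [clampFin]; omega

lemma prod_adj_iff (i : ℕ) (X Y : DigImage) (p q : X.carrier × Y.carrier) :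
    (DigImage.prod i X Y).adj p q ↔
      (if i ≤ 1 then (p.1 = q.1 ∧ Y.adj p.2 q.2) ∨ (p.2 = q.2 ∧ X.adj p.1 q.1)
       else X.adj p.1 q.1 ∧ Y.adj p.2 q.2) := Iff.rfl

lemma digInterval_adj_iff (m : ℕ) (t s : Fin (m+1)) :
    (digInterval m).adj t s ↔ |(t : ℤ) - (s : ℤ)| ≤ 1 := Iff.rfl

lemma MapChain.homotopic {i : ℕ} {X Y : DigImage} {f g : X.carrier → Y.carrier}
    (h : MapChain i X Y f g) : DigHomotopic i X Y f g := by
  obtain ⟨m, F, h0, hm, hc, hs⟩ := h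
  refine ⟨m, fun p => F p.2.val p.1, ?_, ?_, ?_⟩
  · have key : ∀ (x x' : X.carrier) (t s : Fin (m+1)),
        (DigImage.prod i X (digInterval m)).adj (x, t) (x', s) →
        Y.adj (F t.val x) (F s.val x') := by
      intro x x' t s hab
      rw [prod_adj_iff] at hab
      simp only [digInterval_adj_iff] at hab
      have hts : t.val < m + 1 := t.isLt
      have hss : s.val < m + 1 := s.isLt
      by_cases hi : i ≤ 1
      · rw [if_pos hi] at hab
        rcases hab with ⟨h1, h2⟩ | ⟨h1, h2⟩
        · subst h1
          rw [abs_le] at h2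
          have htri : s.val = t.val ∨ s.val = t.val + 1 ∨
              t.val = s.val + 1 := by omega
          rcases htri with ht | ht | ht
          · rw [ht]; exact Y.adj_refl _
          · have := hs t.val (by omega)
            rw [StepAdj, if_pos hi] at this
            rw [ht]; exact this x
          · have := hs s.val (by omega)
            rw [StepAdj, if_pos hi] at this
            rw [ht]; exact Y.adj_symm (this x)
        · have h1' : t = s := h1
          subst h1'
          exact hc t.val (by omega) h2
      · rw [if_neg hi] at hab
        obtain ⟨h1, h2⟩ := hab
        rw [abs_le] at h2
        have htri : s.val = t.val ∨ s.val = t.val + 1 ∨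
            t.val = s.val + 1 := by omega
        rcases htri with ht | ht | ht
        · rw [ht]; exact hc t.val (by omega) h1
        · have := hs t.val (by omega)
          rw [StepAdj, if_neg hi] at this
          rw [ht]; exact this h1
        · have := hs s.val (by omega)
          rw [StepAdj, if_neg hi] at this
          rw [ht]; exact Y.adj_symm (this (X.adj_symm h1))
    intro a b hab
    exact key a.1 b.1 a.2 b.2 hab
  · intro x; simp only [Fin.val_zero]; rw [h0]
  · intro x; simp only [Fin.val_last]; rw [hm]

lemma DigHomotopic.mapChain {i : ℕ} {X Y : DigImage} {f g : X.carrier → Y.carrier}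
    (h : DigHomotopic i X Y f g) : MapChain i X Y f g := by
  obtain ⟨m, H, hc, h0, hm⟩ := h
  refine ⟨m, fun k x => H (x, clampFin m k), ?_, ?_, ?_, ?_⟩
  · funext x
    show H (x, clampFin m 0) = f x
    rw [clampFin_zero]; exact h0 x
  · funext x
    show H (x, clampFin m m) = g x
    rw [clampFin_last]; exact hm x
  · intro k hk a b hab
    apply hc
    refine (prod_adj_iff i X (digInterval m) _ _).mpr ?_
    split_ifs with hi
    · exact Or.inr ⟨rfl, hab⟩
    · refine ⟨hab, ?_⟩
      rw [digInterval_adj_iff]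
      simp
  · intro k hk
    rw [StepAdj]
    have hv1 : (clampFin m k).val = k := clampFin_val m k (by omega)
    have hv2 : (clampFin m (k+1)).val = k + 1 := clampFin_val m (k+1) (by omega)
    have hadj : (digInterval m).adj (clampFin m k) (clampFin m (k+1)) := by
      rw [digInterval_adj_iff, abs_le]
      constructor <;> omega
    split_ifs with hi
    · intro x
      apply hc
      refine (prod_adj_iff i X (digInterval m) _ _).mpr ?_; rw [if_pos hi]
      exact Or.inl ⟨rfl, hadj⟩
    · intro x x' hxx'
      apply hc
      refine (prod_adj_iff i X (digInterval m) _ _).mpr ?_; rw [if_neg hi]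
      exact ⟨hxx', hadj⟩

lemma digHomotopic_refl {i : ℕ} {X Y : DigImage} {f : X.carrier → Y.carrier}
    (hf : DigContinuous X Y f) : DigHomotopic i X Y f f :=
  MapChain.homotopic ⟨0, fun _ => f, rfl, rfl, fun _ _ => hf, fun k hk => absurd hk (by omega)⟩

lemma digHomotopic_symm {i : ℕ} {X Y : DigImage} {f g : X.carrier → Y.carrier}
    (h : DigHomotopic i X Y f g) : DigHomotopic i X Y g f := by
  obtain ⟨m, F, h0, hm, hc, hs⟩ := h.mapChain
  apply MapChain.homotopic
  refine ⟨m, fun k => F (m - k), by simpa using hm, by simpa using h0,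
    fun k hk => hc (m - k) (by omega), ?_⟩
  intro k hk
  show StepAdj i X Y (F (m - k)) (F (m - (k+1)))
  have hj : m - k = (m - (k+1)) + 1 := by omega
  have hjlt : m - (k+1) < m := by omega
  have := hs _ hjlt
  rw [StepAdj] at this ⊢
  split_ifs at this ⊢ with hi
  · intro x; rw [hj]; exact Y.adj_symm (this x)
  · intro x x' hxx'; rw [hj]; exact Y.adj_symm (this (X.adj_symm hxx'))

lemma digHomotopic_trans {i : ℕ} {X Y : DigImage} {f g h : X.carrier → Y.carrier}
    (h1 : DigHomotopic i X Y f g) (h2 : DigHomotopic i X Y g h) :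
    DigHomotopic i X Y f h := by
  obtain ⟨m1, F1, e0, e1, c1, s1⟩ := h1.mapChain
  obtain ⟨m2, F2, d0, d1, c2, s2⟩ := h2.mapChain
  apply MapChain.homotopic
  refine ⟨m1 + m2, fun k => if k ≤ m1 then F1 k else F2 (k - m1), ?_, ?_, ?_, ?_⟩
  · show (if 0 ≤ m1 then F1 0 else F2 (0 - m1)) = f
    rw [if_pos (Nat.zero_le m1), e0]
  · show (if m1 + m2 ≤ m1 then F1 (m1 + m2) else F2 (m1 + m2 - m1)) = h
    rcases Nat.eq_zero_or_pos m2 with hz | hp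
    · subst hz
      simp only [Nat.add_zero]
      rw [if_pos le_rfl, e1, ← d1, ← d0]
    · rw [if_neg (by omega)]
      have : m1 + m2 - m1 = m2 := by omega
      rw [this, d1]
  · intro k hk
    show DigContinuous X Y (if k ≤ m1 then F1 k else F2 (k - m1))
    split_ifs with hkm
    · exact c1 k hkm
    · exact c2 (k - m1) (by omega)
  · intro k hk
    show StepAdj i X Y (if k ≤ m1 then F1 k else F2 (k - m1))
      (if k + 1 ≤ m1 then F1 (k+1) else F2 (k + 1 - m1))
    rcases lt_trichotomy k m1 with hlt | heq | hgt
    · rw [if_pos (by omega), if_pos (by omega)]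
      exact s1 k hlt
    · subst heq
      rw [if_pos le_rfl, if_neg (by omega)]
      have : k + 1 - k = 1 := by omega
      rw [this, e1, ← d0]
      exact s2 0 (by omega)
    · rw [if_neg (by omega), if_neg (by omega)]
      have : k + 1 - m1 = (k - m1) + 1 := by omega
      rw [this]
      exact s2 (k - m1) (by omega)

lemma digHomotopic_comp_left {i : ℕ} {X Y Z : DigImage} {f g : X.carrier → Y.carrier}
    (φ : Y.carrier → Z.carrier) (hφ : DigContinuous Y Z φ)
    (h : DigHomotopic i X Y f g) : DigHomotopic i X Z (φ ∘ f) (φ ∘ g) := by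
  obtain ⟨m, F, h0, hm, hc, hs⟩ := h.mapChain
  apply MapChain.homotopic
  refine ⟨m, fun k => φ ∘ F k, by show φ ∘ F 0 = φ ∘ f; rw [h0],
    by show φ ∘ F m = φ ∘ g; rw [hm],
    fun k hk a b hab => hφ (hc k hk hab), ?_⟩
  intro k hk
  show StepAdj i X Z (φ ∘ F k) (φ ∘ F (k+1))
  have := hs k hk
  rw [StepAdj] at this ⊢
  split_ifs at this ⊢ with hi
  · intro x; exact hφ (this x)
  · intro x x' hxx'; exact hφ (this hxx')

lemma digContinuous_iterate {X : DigImage} {h : X.carrier → X.carrier}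
    (hc : DigContinuous X X h) (n : ℕ) : DigContinuous X X h^[n] := by
  induction n with
  | zero => intro a b hab; simpa using hab
  | succ n ih =>
      intro a b hab
      rw [Function.iterate_succ_apply', Function.iterate_succ_apply']
      exact hc (ih hab)

lemma exists_idempotent_iterate {α : Type} [Finite α] (h : α → α) :
    ∃ n, 1 ≤ n ∧ ∀ x, h^[n] (h^[n] x) = h^[n] x := by
  obtain ⟨a, b, hab, he⟩ := Finite.exists_ne_map_eq_of_infinite (fun k : ℕ => h^[k])
  wlog hlt : a < b generalizing a b
  · exact this b a hab.symm he.symm (by omega)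
  set p := b - a with hp
  have hp1 : 1 ≤ p := by omega
  have key : ∀ m, a ≤ m → h^[m + p] = h^[m] := by
    intro m hm
    have h1 : m + p = (m - a) + b := by omega
    have h2 : m = (m - a) + a := by omega
    rw [h1, Function.iterate_add]
    conv_rhs => rw [h2, Function.iterate_add]
    rw [← he]
  have key2 : ∀ k m, a ≤ m → h^[m + k * p] = h^[m] := by
    intro k
    induction k with
    | zero => simp
    | succ k ih =>
        intro m hm
        have : m + (k+1) * p = (m + p) + k * p := by ring
        rw [this, ih (m + p) (by omega), key m hm]
  refine ⟨(a+1)*p, Nat.mul_pos (by omega) hp1, ?_⟩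
  have := key2 (a+1) ((a+1)*p)
    (le_trans (by omega) (Nat.le_mul_of_pos_right (a+1) hp1))
  intro x
  calc h^[(a+1)*p] (h^[(a+1)*p] x) = h^[(a+1)*p + (a+1)*p] x := by
        rw [Function.iterate_add_apply]
      _ = h^[(a+1)*p] x := by rw [this]

end AuxHelpers

/-- `X` is `NP_i`-irreducible iff no automorphism of `X` is
`NP_i`-homotopic to a non-surjective continuous map. -/
theorem irreducible_iff_no_automorphism_homotopic_to_nonsurjection
    (i : ℕ) (hi : i = 1 ∨ i = 2) (X : DigImage) :
    DigIrreducible i X ↔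
      ¬ ∃ (f g : X.carrier → X.carrier),
        IsDigIso X X f ∧ DigContinuous X X g ∧ ¬ Function.Surjective g ∧
        DigHomotopic i X X f g := by
  rw [DigIrreducible]
  apply not_congr
  constructor
  · rintro ⟨Y, hcard, f, g, hfc, hgc, hgf, hfg⟩
    refine ⟨id, g ∘ f, ⟨fun a b h => h, id, fun a b h => h, fun x => rfl, fun x => rfl⟩,
      fun a b h => hgc (hfc h), ?_, digHomotopic_symm hgf⟩
    intro hsurj
    have hsg : Function.Surjective g := Function.Surjective.of_comp hsurj
    have := Fintype.card_le_of_surjective g hsg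
    omega
  · rintro ⟨f, g, ⟨hfc, finv, hfinvc, hli, hri⟩, hgc, hns, hfg⟩
    classical
    set h : X.carrier → X.carrier := finv ∘ g with hh
    have hhc : DigContinuous X X h := fun a b hab => hfinvc (hgc hab)
    have hid : DigHomotopic i X X id h := by
      have h1 := digHomotopic_comp_left finv hfinvc hfg
      have e1 : finv ∘ f = id := funext hli
      rwa [e1] at h1
    obtain ⟨n, hn1, hidem⟩ := exists_idempotent_iterate h
    have hiter : ∀ k, DigHomotopic i X X id (h^[k+1]) := by
      intro k
      induction k with
      | zero => simpa using hid
      | succ k ih =>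
          refine digHomotopic_trans ih ?_
          have h2 := digHomotopic_comp_left (h^[k+1])
            (digContinuous_iterate hhc (k+1)) hid
          have e1 : h^[k+1] ∘ id = h^[k+1] := rfl
          have e2 : h^[k+1] ∘ h = h^[k+1+1] := (Function.iterate_succ h (k+1)).symm
          rwa [e1, e2] at h2
    have hidn : DigHomotopic i X X id (h^[n]) := by
      obtain ⟨k, rfl⟩ : ∃ k, n = k + 1 := ⟨n - 1, by omega⟩
      exact hiter k
    set e : X.carrier → X.carrier := h^[n] with he
    have hec : DigContinuous X X e := digContinuous_iterate hhc n
    set P : X.carrier → Prop := fun x => ∃ z, e z = x with hP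
    have hnse : ¬ Function.Surjective e := by
      intro hse
      apply hns
      have hgf' : g = f ∘ h := by
        funext x
        show g x = f (finv (g x))
        rw [hri (g x)]
      have hhs : Function.Surjective h := by
        have e3 : e = h ∘ h^[n-1] := by
          rw [he]
          conv_lhs => rw [show n = (n-1) + 1 by omega]
          rw [Function.iterate_succ']
        rw [e3] at hse
        exact Function.Surjective.of_comp hse
      rw [hgf']
      exact Function.Surjective.comp hri.surjective hhs
    obtain ⟨y, hy⟩ : ∃ y, ¬ P y := by
      by_contra hall
      push_neg at hall
      exact hnse fun y => hall y
    refine ⟨subImage X P, ?_, (fun x => ⟨e x, x, rfl⟩), Subtype.val,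
      fun a b hab => hec hab, fun a b hab => hab, ?_, ?_⟩
    · have h1 : Fintype.card {x // P x} < Fintype.card X.carrier :=
        Fintype.card_subtype_lt hy
      have h2 : Fintype.card (subImage X P).carrier = Fintype.card {x // P x} :=
        Fintype.card_congr (Equiv.refl _)
      omega
    · have e4 : (Subtype.val ∘ fun x => (⟨e x, ⟨x, rfl⟩⟩ : (subImage X P).carrier)) = e := rfl
      refine (congrArg (fun φ => DigHomotopic i X X φ id) e4).mpr ?_
      exact digHomotopic_symm hidn
    · have e5 : ((fun x => (⟨e x, ⟨x, rfl⟩⟩ : (subImage X P).carrier)) ∘ Subtype.val) = id := by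
        funext a
        apply Subtype.ext
        show e a.1 = a.1
        obtain ⟨z, hz⟩ := a.2
        rw [← hz]
        exact hidem z
      refine (congrArg (fun φ => DigHomotopic i (subImage X P) (subImage X P) φ id) e5).mpr ?_
      exact digHomotopic_refl fun a b hab => hab
end

section
/- Let (X,e,μ) be an NP_i-digital H-space (i ∈ {1,2}) with X connected and NP_i-irreducible. Then there exist a left inverse map α : X → X and a right inverse map β : X → X; that is, continuous maps with μ(α(x),x) = e and μ(x,β(x)) = e for all x ∈ X. -/
section Aux

/-- Intro rule for the normal product adjacency. -/
lemma prodAdj_intro (i : ℕ) (X Y : DigImage) {a c : X.carrier} {b d : Y.carrier}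
    (hX : X.adj a c) (hY : Y.adj b d) (hE : i ≤ 1 → a = c ∨ b = d) :
    (DigImage.prod i X Y).adj (a, b) (c, d) := by
  show (if i ≤ 1 then _ ∨ _ else _)
  split_ifs with hi
  · rcases hE hi with h | h
    · exact Or.inl ⟨h, hY⟩
    · exact Or.inr ⟨h, hX⟩
  · exact ⟨hX, hY⟩

/-- Elimination rule for the normal product adjacency. -/
lemma prodAdj_dest {i : ℕ} {X Y : DigImage} {p q : X.carrier × Y.carrier}
    (h : (DigImage.prod i X Y).adj p q) :
    X.adj p.1 q.1 ∧ Y.adj p.2 q.2 ∧ (i ≤ 1 → p.1 = q.1 ∨ p.2 = q.2) := by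
  have h' : (if i ≤ 1 then (p.1 = q.1 ∧ Y.adj p.2 q.2) ∨ (p.2 = q.2 ∧ X.adj p.1 q.1)
      else X.adj p.1 q.1 ∧ Y.adj p.2 q.2) := h
  split_ifs at h' with hi
  · rcases h' with ⟨h1, h2⟩ | ⟨h1, h2⟩
    · exact ⟨h1 ▸ X.adj_refl _, h2, fun _ => Or.inl h1⟩
    · exact ⟨h2, h1 ▸ Y.adj_refl _, fun _ => Or.inr h1⟩
  · exact ⟨h'.1, h'.2, fun h2 => absurd h2 hi⟩

lemma interval_adj_iff {m : ℕ} (a b : Fin (m+1)) :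
    (digInterval m).adj a b ↔ ((a:ℕ) ≤ (b:ℕ)+1 ∧ (b:ℕ) ≤ (a:ℕ)+1) := by
  show |(a : ℤ) - (b : ℤ)| ≤ 1 ↔ _
  rw [abs_le]
  constructor <;> intro h <;> constructor <;> omega

lemma digRefl (i : ℕ) (X Y : DigImage) (f : X.carrier → Y.carrier)
    (hf : DigContinuous X Y f) : DigHomotopic i X Y f f := by
  refine ⟨0, fun p => f p.1, ?_, fun x => rfl, fun x => rfl⟩
  intro a b hab
  obtain ⟨hX, _, _⟩ := prodAdj_dest hab
  exact hf hX

lemma digTrans {i : ℕ} {X Y : DigImage} {f g h : X.carrier → Y.carrier}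
    (H1h : DigHomotopic i X Y f g) (H2h : DigHomotopic i X Y g h) :
    DigHomotopic i X Y f h := by
  obtain ⟨m, H1, hc1, h10, h1m⟩ := H1h
  obtain ⟨n, H2, hc2, h20, h2n⟩ := H2h
  have c1 : ∀ (x : X.carrier) (a b : Fin (m+1)), a = b → H1 (x, a) = H1 (x, b) :=
    fun x a b hab => by rw [hab]
  have c2 : ∀ (x : X.carrier) (a b : Fin (n+1)), a = b → H2 (x, a) = H2 (x, b) :=
    fun x a b hab => by rw [hab]
  refine ⟨m + n, fun p =>
    if hp : (p.2 : ℕ) ≤ m then H1 (p.1, ⟨(p.2 : ℕ), by omega⟩)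
    else H2 (p.1, ⟨(p.2 : ℕ) - m, by have := p.2.isLt; omega⟩), ?_, ?_, ?_⟩
  · -- continuity
    have key : ∀ p q : X.carrier × Fin (m + n + 1),
        (DigImage.prod i X (digInterval (m+n))).adj p q → (p.2 : ℕ) ≤ (q.2 : ℕ) →
        Y.adj (if hp : (p.2 : ℕ) ≤ m then H1 (p.1, ⟨(p.2 : ℕ), by omega⟩)
            else H2 (p.1, ⟨(p.2 : ℕ) - m, by have := p.2.isLt; omega⟩))
          (if hq : (q.2 : ℕ) ≤ m then H1 (q.1, ⟨(q.2 : ℕ), by omega⟩)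
            else H2 (q.1, ⟨(q.2 : ℕ) - m, by have := q.2.isLt; omega⟩)) := by
      intro p q hpq hle
      obtain ⟨hX, hI, hE⟩ := prodAdj_dest hpq
      rw [interval_adj_iff] at hI
      replace hI : (p.2 : ℕ) ≤ (q.2 : ℕ) + 1 ∧ (q.2 : ℕ) ≤ (p.2 : ℕ) + 1 := hI
      have hne : (p.2 : ℕ) ≠ (q.2 : ℕ) → (i ≤ 1 → p.1 = q.1) := by
        intro hne hi
        refine (hE hi).resolve_right ?_
        intro hc; exact hne (congrArg Fin.val hc)
      by_cases hq : (q.2 : ℕ) ≤ m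
      · have hp : (p.2 : ℕ) ≤ m := le_trans hle hq
        rw [dif_pos hp, dif_pos hq]
        refine hc1 (prodAdj_intro i X (digInterval m) hX ?_ ?_)
        · rw [interval_adj_iff]; constructor <;> simp <;> omega
        · intro hi
          refine (hE hi).imp id (fun hc => ?_)
          have := congrArg Fin.val hc
          exact Fin.ext (by simpa using this)
      · by_cases hp : (p.2 : ℕ) ≤ m
        · -- straddle : p.2 = m, q.2 = m+1
          have hpm : (p.2 : ℕ) = m := by omega
          have hqm : (q.2 : ℕ) = m + 1 := by omega
          rw [dif_pos hp, dif_neg hq]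
          have e1 : H1 (p.1, ⟨(p.2 : ℕ), by omega⟩) = H2 (p.1, (0 : Fin (n+1))) := by
            rw [c1 p.1 _ (Fin.last m) (Fin.ext (by simpa using hpm)), h1m, h20]
          rw [e1]
          refine hc2 (prodAdj_intro i X (digInterval n) hX ?_ ?_)
          · rw [interval_adj_iff]; constructor <;> simp <;> omega
          · intro hi
            exact Or.inl (hne (by omega) hi)
        · rw [dif_neg hp, dif_neg hq]
          refine hc2 (prodAdj_intro i X (digInterval n) hX ?_ ?_)
          · rw [interval_adj_iff]; constructor <;> simp <;> omega
          · intro hi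
            refine (hE hi).imp id (fun hc => ?_)
            have := congrArg Fin.val hc
            exact Fin.ext (by simp; omega)
    intro p q hpq
    rcases le_or_gt (Fin.val p.2) (Fin.val q.2) with hle | hlt
    · exact key p q hpq hle
    · exact Y.adj_symm (key q p ((DigImage.prod i X (digInterval (m+n))).adj_symm hpq) (le_of_lt hlt))
  · intro x
    beta_reduce
    rw [dif_pos (by simp)]
    rw [c1 x _ (0 : Fin (m+1)) (Fin.ext (by simp)), h10]
  · intro x
    beta_reduce
    by_cases hn : n = 0
    · subst hn
      rw [dif_pos (by simp [Fin.last])]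
      rw [c1 x _ (Fin.last m) (Fin.ext (by simp [Fin.last])), h1m,
        ← h2n x, c2 x (Fin.last 0) 0 (Fin.ext (by simp)), h20]
    · rw [dif_neg (by simp only [Fin.val_last]; omega)]
      rw [c2 x _ (Fin.last n) (Fin.ext (by simp only [Fin.val_last]; omega)), h2n]

lemma digPrecomp {i : ℕ} {W X Y : DigImage} {k : W.carrier → X.carrier}
    {f g : X.carrier → Y.carrier} (hk : DigContinuous W X k)
    (hfg : DigHomotopic i X Y f g) : DigHomotopic i W Y (f ∘ k) (g ∘ k) := by
  obtain ⟨m, H, hc, h0, hm⟩ := hfg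
  refine ⟨m, fun p => H (k p.1, p.2), ?_, fun w => h0 (k w), fun w => hm (k w)⟩
  intro p q hpq
  obtain ⟨hX, hI, hE⟩ := prodAdj_dest hpq
  exact hc (prodAdj_intro i X (digInterval m) (hk hX) hI
    (fun hi => (hE hi).imp (congrArg k) id))

lemma digIdCont (X : DigImage) : DigContinuous X X id := fun _ _ h => h

lemma digIterCont (X : DigImage) (f : X.carrier → X.carrier)
    (hf : DigContinuous X X f) : ∀ n, DigContinuous X X (f^[n]) := by
  intro n
  induction n with
  | zero => exact digIdCont X
  | succ n ih =>
    rw [Function.iterate_succ]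
    exact fun a b h => ih (hf h)

lemma digIterHomotopic {i : ℕ} {X : DigImage} {f : X.carrier → X.carrier}
    (hf : DigContinuous X X f) (h1 : DigHomotopic i X X f id) :
    ∀ n, DigHomotopic i X X (f^[n]) id := by
  intro n
  induction n with
  | zero => exact digRefl i X X id (digIdCont X)
  | succ n ih =>
    rw [Function.iterate_succ]
    have step : DigHomotopic i X X (f^[n] ∘ f) (id ∘ f) := digPrecomp hf ih
    exact digTrans step h1

/-- A continuous bijection of a (finite) digital image has a continuous two-sided
inverse, namely an iterate of itself. -/
lemma exists_cont_inverse (X : DigImage) (f : X.carrier → X.carrier)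
    (hf : DigContinuous X X f) (hbij : Function.Bijective f) :
    ∃ g : X.carrier → X.carrier, DigContinuous X X g ∧
      (∀ x, g (f x) = x) ∧ (∀ x, f (g x) = x) := by
  obtain ⟨a, b, hab, heq⟩ :=
    Finite.exists_ne_map_eq_of_infinite (fun k : ℕ => f^[k])
  have hinj : ∀ n, Function.Injective (f^[n]) := fun n => hbij.1.iterate n
  have key : ∀ (s t : ℕ), s < t → f^[s] = f^[t] → f^[t - s] = id := by
    intro s t hst he
    funext x
    apply hinj s
    have : f^[s + (t - s)] x = f^[s] (f^[t-s] x) := Function.iterate_add_apply f s (t-s) x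
    rw [show s + (t - s) = t by omega] at this
    rw [← he] at this
    simpa using this.symm
  have hk : ∃ k, 1 ≤ k ∧ f^[k] = id := by
    rcases lt_or_gt_of_ne hab with h | h
    · exact ⟨b - a, by omega, key a b h heq⟩
    · exact ⟨a - b, by omega, key b a h heq.symm⟩
  obtain ⟨k, hk1, hkid⟩ := hk
  refine ⟨f^[k-1], digIterCont X f hf (k-1), ?_, ?_⟩
  · intro x
    have h1 : f^[k-1] (f x) = f^[(k-1)+1] x := (Function.iterate_succ_apply f (k-1) x).symm
    rw [h1, show k - 1 + 1 = k from by omega, hkid]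
    rfl
  · intro x
    have h1 : f (f^[k-1] x) = f^[(k-1)+1] x := (Function.iterate_succ_apply' f (k-1) x).symm
    rw [h1, show k - 1 + 1 = k from by omega, hkid]
    rfl

/-- On an irreducible image, a self-map homotopic to the identity is bijective. -/
lemma bijective_of_homotopic_id {i : ℕ} {X : DigImage} {f : X.carrier → X.carrier}
    (hf : DigContinuous X X f) (hfid : DigHomotopic i X X f id)
    (hirr : DigIrreducible i X) : Function.Bijective f := by
  have hsurj : Function.Surjective f := by
    by_contra hns
    obtain ⟨a, b, hab, heq⟩ :=
      Finite.exists_ne_map_eq_of_infinite (fun k : ℕ => f^[k])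
    -- normalize to s < t with equal iterates
    obtain ⟨s, t, hst, he⟩ : ∃ s t : ℕ, s < t ∧ f^[s] = f^[t] := by
      rcases lt_or_gt_of_ne hab with h | h
      · exact ⟨a, b, h, heq⟩
      · exact ⟨b, a, h, heq.symm⟩
    set d := t - s with hd
    have hd1 : 1 ≤ d := by omega
    have step : ∀ j, s ≤ j → f^[j] = f^[j + d] := by
      intro j hj
      have h1 : f^[j] = f^[j - s] ∘ f^[s] := by
        rw [← Function.iterate_add f (j-s) s, show j - s + s = j by omega]
      have h2 : f^[j + d] = f^[j - s] ∘ f^[t] := by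
        rw [← Function.iterate_add f (j-s) t, show j - s + t = j + d by omega]
      rw [h1, h2, he]
    have step2 : ∀ (c : ℕ) (j : ℕ), s ≤ j → f^[j] = f^[j + c * d] := by
      intro c
      induction c with
      | zero => intro j hj; simp
      | succ c ih =>
        intro j hj
        rw [ih j hj, show j + (c+1)*d = (j + c*d) + d by ring]
        exact step (j + c*d) (by omega)
    set N := (s + 1) * d with hN
    have hN1 : 1 ≤ N := by
      have : s + 1 ≤ (s+1) * d := Nat.le_mul_of_pos_right _ (by omega)
      omega
    have hNs : s ≤ N := by
      have : s + 1 ≤ (s+1) * d := Nat.le_mul_of_pos_right _ (by omega)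
      omega
    have hNN : f^[N + N] = f^[N] := by
      have := step2 (s+1) N hNs
      rw [← hN] at this
      exact this.symm
    -- the stable image
    set P : X.carrier → Prop := fun x => x ∈ Set.range (f^[N]) with hP
    set Y : DigImage := subImage X P with hY
    have hfix : ∀ x : X.carrier, P x → f^[N] x = x := by
      rintro x ⟨y, rfl⟩
      have : f^[N + N] y = f^[N] (f^[N] y) := by
        rw [Nat.add_comm]; exact Function.iterate_add_apply f N N y
      rw [hNN] at this
      exact this.symm
    have hNsurj : ¬ Function.Surjective (f^[N]) := by
      intro hs
      apply hns
      have : f^[N] = f ∘ f^[N - 1] := by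
        conv_lhs => rw [show N = (N - 1) + 1 from by omega]
        exact Function.iterate_succ' f (N - 1)
      rw [this] at hs
      exact hs.of_comp
    obtain ⟨x0, hx0⟩ := not_forall.mp (fun hall => hNsurj (fun y => hall y))
    have hx0' : ¬ P x0 := by
      intro hc
      exact hx0 ⟨x0, hfix x0 hc⟩
    -- homotopy equivalence X ≃ Y
    have hcard : Fintype.card Y.carrier < Fintype.card X.carrier := by
      rw [← Nat.card_eq_fintype_card, ← Nat.card_eq_fintype_card]
      show Nat.card {x : X.carrier // P x} < Nat.card X.carrier
      classical
      rw [Nat.card_eq_fintype_card, Nat.card_eq_fintype_card]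
      have hlt := Fintype.card_subtype_lt (p := P) hx0'
      convert hlt using 2
    refine hirr ⟨Y, hcard, ?_⟩
    refine ⟨fun x => ⟨f^[N] x, ⟨x, rfl⟩⟩, fun y => y.1, ?_, ?_, ?_, ?_⟩
    · intro a b hab2
      exact digIterCont X f hf N hab2
    · intro a b hab2
      exact hab2
    · exact digIterHomotopic hf hfid N
    · have : (fun (y : Y.carrier) => (⟨f^[N] y.1, ⟨y.1, rfl⟩⟩ : Y.carrier)) = id := by
        funext y
        exact Subtype.ext (hfix y.1 y.2)
      show DigHomotopic i Y Y (fun y => (⟨f^[N] y.1, _⟩ : Y.carrier)) id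
      rw [this]
      exact digRefl i Y Y id (digIdCont Y)
  exact ⟨(Finite.injective_iff_surjective).mpr hsurj, hsurj⟩

/-- One-step homotopy for right translations. -/
lemma step_right {i : ℕ} {X : DigImage} {μ : X.carrier × X.carrier → X.carrier}
    (hμ : DigContinuous (DigImage.prod i X X) X μ) {a b : X.carrier} (hab : X.adj a b) :
    DigHomotopic i X X (fun y => μ (y, a)) (fun y => μ (y, b)) := by
  set c : Fin 2 → X.carrier := fun t => if (t : ℕ) = 0 then a else b with hc
  have hcadj : ∀ s t : Fin 2, X.adj (c s) (c t) := by
    intro s t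
    simp only [hc]
    split_ifs
    · exact X.adj_refl a
    · exact hab
    · exact X.adj_symm hab
    · exact X.adj_refl b
  refine ⟨1, fun p => μ (p.1, c p.2), ?_, ?_, ?_⟩
  · intro p q hpq
    obtain ⟨hX, _, hE⟩ := prodAdj_dest hpq
    exact hμ (prodAdj_intro i X X hX (hcadj p.2 q.2)
      (fun hi => (hE hi).imp id (congrArg c)))
  · intro x; simp [hc]
  · intro x; simp [hc, Fin.last]

/-- One-step homotopy for left translations. -/
lemma step_left {i : ℕ} {X : DigImage} {μ : X.carrier × X.carrier → X.carrier}
    (hμ : DigContinuous (DigImage.prod i X X) X μ) {a b : X.carrier} (hab : X.adj a b) :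
    DigHomotopic i X X (fun y => μ (a, y)) (fun y => μ (b, y)) := by
  set c : Fin 2 → X.carrier := fun t => if (t : ℕ) = 0 then a else b with hc
  have hcadj : ∀ s t : Fin 2, X.adj (c s) (c t) := by
    intro s t
    simp only [hc]
    split_ifs
    · exact X.adj_refl a
    · exact hab
    · exact X.adj_symm hab
    · exact X.adj_refl b
  refine ⟨1, fun p => μ (c p.2, p.1), ?_, ?_, ?_⟩
  · intro p q hpq
    obtain ⟨hX, _, hE⟩ := prodAdj_dest hpq
    exact hμ (prodAdj_intro i X X (hcadj p.2 q.2) hX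
      (fun hi => (hE hi).symm.imp (congrArg c) id))
  · intro x; simp [hc]
  · intro x; simp [hc, Fin.last]

/-- Homotopy along a path, for a family of maps with one-step homotopies. -/
lemma homotopic_of_path {i : ℕ} {X : DigImage} (F : X.carrier → X.carrier → X.carrier)
    (hstep : ∀ {a b : X.carrier}, X.adj a b → DigHomotopic i X X (F a) (F b))
    (hcont : ∀ a, DigContinuous X X (F a))
    {a b : X.carrier} (hab : Relation.ReflTransGen X.adj a b) :
    DigHomotopic i X X (F b) (F a) := by
  induction hab with
  | refl => exact digRefl i X X (F a) (hcont a)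
  | tail _ hbc ih => exact digTrans (hstep (X.adj_symm hbc)) ih

end Aux

/-- A connected `NP_i`-irreducible `NP_i`-digital H-space has
left and right inverse maps. -/
theorem irreducible_has_inverses (i : ℕ) (hi : i = 1 ∨ i = 2)
    (X : DigImage) (e : X.carrier) (μ : X.carrier × X.carrier → X.carrier)
    (h : IsHSpace i X e μ) (hconn : DigConnected X) (hirr : DigIrreducible i X) :
    (∃ α : X.carrier → X.carrier, DigContinuous X X α ∧ ∀ x, μ (α x, x) = e) ∧
    (∃ β : X.carrier → X.carrier, DigContinuous X X β ∧ ∀ x, μ (x, β x) = e) := by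
  have hμ := h.continuous
  -- right translations
  have Rcont : ∀ a, DigContinuous X X (fun y => μ (y, a)) := by
    intro a y y' hyy'
    exact hμ (prodAdj_intro i X X hyy' (X.adj_refl a) (fun _ => Or.inr rfl))
  have Lcont : ∀ a, DigContinuous X X (fun y => μ (a, y)) := by
    intro a y y' hyy'
    exact hμ (prodAdj_intro i X X (X.adj_refl a) hyy' (fun _ => Or.inl rfl))
  have Rhty : ∀ x, DigHomotopic i X X (fun y => μ (y, x)) id := by
    intro x
    have hpath : DigHomotopic i X X (fun y => μ (y, x)) (fun y => μ (y, e)) :=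
      homotopic_of_path (fun a y => μ (y, a)) (fun hab => step_right hμ hab)
        (fun a => Rcont a) (hconn e x)
    exact digTrans hpath h.right_unit
  have Lhty : ∀ x, DigHomotopic i X X (fun y => μ (x, y)) id := by
    intro x
    have hpath : DigHomotopic i X X (fun y => μ (x, y)) (fun y => μ (e, y)) :=
      homotopic_of_path (fun a y => μ (a, y)) (fun hab => step_left hμ hab)
        (fun a => Lcont a) (hconn e x)
    exact digTrans hpath h.left_unit
  constructor
  · -- left inverse
    have key : ∀ x, ∃ g : X.carrier → X.carrier, DigContinuous X X g ∧
        (∀ y, g (μ (y, x)) = y) ∧ (∀ y, μ (g y, x) = y) := by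
      intro x
      have hbij : Function.Bijective (fun y => μ (y, x)) :=
        bijective_of_homotopic_id (Rcont x) (Rhty x) hirr
      obtain ⟨g, hg1, hg2, hg3⟩ := exists_cont_inverse X (fun y => μ (y, x)) (Rcont x) hbij
      exact ⟨g, hg1, hg2, hg3⟩
    choose g hgc hgl hgr using key
    refine ⟨fun x => g x e, ?_, fun x => hgr x e⟩
    intro x x' hxx'
    have h1 : X.adj (μ (g x' e, x)) (μ (g x' e, x')) :=
      hμ (prodAdj_intro i X X (X.adj_refl _) hxx' (fun _ => Or.inl rfl))
    rw [hgr x' e] at h1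
    have h2 : X.adj (g x (μ (g x' e, x))) (g x e) := hgc x h1
    rw [hgl x (g x' e)] at h2
    exact X.adj_symm h2
  · -- right inverse
    have key : ∀ x, ∃ g : X.carrier → X.carrier, DigContinuous X X g ∧
        (∀ y, g (μ (x, y)) = y) ∧ (∀ y, μ (x, g y) = y) := by
      intro x
      have hbij : Function.Bijective (fun y => μ (x, y)) :=
        bijective_of_homotopic_id (Lcont x) (Lhty x) hirr
      obtain ⟨g, hg1, hg2, hg3⟩ := exists_cont_inverse X (fun y => μ (x, y)) (Lcont x) hbij
      exact ⟨g, hg1, hg2, hg3⟩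
    choose g hgc hgl hgr using key
    refine ⟨fun x => g x e, ?_, fun x => hgr x e⟩
    intro x x' hxx'
    have h1 : X.adj (μ (x, g x' e)) (μ (x', g x' e)) :=
      hμ (prodAdj_intro i X X hxx' (X.adj_refl _) (fun _ => Or.inr rfl))
    rw [hgr x' e] at h1
    have h2 : X.adj (g x (μ (x, g x' e))) (g x e) := hgc x h1
    rw [hgl x (g x' e)] at h2
    exact X.adj_symm h2
end
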